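/- Let Y be a finite-dimensional subspace of ℓ∞ (bounded real sequences) such that the quotient map π : ℓ∞ → ℓ∞/c₀ restricted to Y is an isomorphism onto its image X. Then for every ε > 0 there exists N ∈ ℕ such that for all n > N, the map sending y ∈ Y to π(y), viewed as a map on the space Y_{[n,∞)} = {y·1_{[n,∞)} : y ∈ Y}, is an isomorphism onto X bounded below by 1 − ε; that is, for every y ∈ Y, ‖π(y)‖ ≥ (1 − ε)·‖y·1_{[n,∞)}‖_∞. -/

import Mathlib

set_option synthInstance.maxHeartbeats 400000
set_option maxHeartbeats 1000000

noncomputable section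

open Set Filter
open scoped ENNReal

/-- The Banach space `ℓ∞` of bounded real sequences with the sup norm. -/
abbrev Linf : Type := ↥(lp (fun _ : ℕ => ℝ) ∞)

/-- For `y ∈ ℓ∞` and `A ⊆ ℕ`, the truncation `y_A`, equal to `y` on `A` and `0` elsewhere. -/
def truncSeq (A : Set ℕ) (y : Linf) : Linf :=
  ⟨fun i => A.indicator (⇑y) i, memℓp_infty ⟨‖y‖, by
    rintro x ⟨i, rfl⟩
    by_cases h : i ∈ A
    · simpa [Set.indicator_of_mem h] using lp.norm_apply_le_norm ENNReal.top_ne_zero y i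
    · simp [Set.indicator_of_notMem h]⟩⟩

/-- The closed subspace `c₀ ⊆ ℓ∞` of sequences converging to `0`. -/
def c0 : Submodule ℝ Linf where
  carrier := {f | Tendsto (fun n => f n) atTop (nhds 0)}
  add_mem' := by
    intro f g hf hg
    have := hf.add hg
    simpa [lp.coeFn_add] using this
  zero_mem' := by
    simpa [lp.coeFn_zero] using
      (tendsto_const_nhds : Tendsto (fun _ : ℕ => (0 : ℝ)) atTop (nhds 0))
  smul_mem' := by
    intro c f hf
    have := hf.const_smul c
    simpa [lp.coeFn_smul] using this

/-- The quotient map `π : ℓ∞ → ℓ∞/c₀`. -/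
def quotMap : Linf →ₗ[ℝ] Linf ⧸ c0 := c0.mkQ

-- aux lemmas
lemma truncSeq_apply (A : Set ℕ) (y : Linf) (i : ℕ) :
    truncSeq A y i = A.indicator (⇑y) i := rfl

lemma mem_c0_iff {y : Linf} : y ∈ c0 ↔ Tendsto (fun n => y n) atTop (nhds 0) := Iff.rfl

lemma truncSeq_norm_le_of (A : Set ℕ) (y : Linf) {C : ℝ} (hC : 0 ≤ C)
    (h : ∀ i ∈ A, ‖y i‖ ≤ C) : ‖truncSeq A y‖ ≤ C := by
  apply lp.norm_le_of_forall_le hC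
  intro i
  by_cases hi : i ∈ A
  · simpa [truncSeq_apply, Set.indicator_of_mem hi] using h i hi
  · simp [truncSeq_apply, Set.indicator_of_notMem hi, hC]

lemma truncSeq_norm_le (A : Set ℕ) (y : Linf) : ‖truncSeq A y‖ ≤ ‖y‖ :=
  truncSeq_norm_le_of A y (norm_nonneg y) fun i _ => lp.norm_apply_le_norm ENNReal.top_ne_zero y i

lemma truncSeq_sub (A : Set ℕ) (y z : Linf) :
    truncSeq A (y - z) = truncSeq A y - truncSeq A z := by
  apply lp.ext
  funext i
  by_cases hi : i ∈ A <;>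
    simp [lp.coeFn_sub, truncSeq_apply, hi, Set.indicator]

lemma truncSeq_smul (A : Set ℕ) (a : ℝ) (y : Linf) :
    truncSeq A (a • y) = a • truncSeq A y := by
  apply lp.ext
  funext i
  by_cases hi : i ∈ A <;>
    simp [lp.coeFn_smul, truncSeq_apply, hi]

lemma truncSeq_zero (A : Set ℕ) : truncSeq A (0 : Linf) = 0 := by
  apply lp.ext
  funext i
  by_cases hi : i ∈ A <;> simp [truncSeq_apply, hi, lp.coeFn_zero, Set.indicator]

lemma trunc_anti (y : Linf) {m n : ℕ} (h : n ≤ m) :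
    ‖truncSeq (Set.Ici m) y‖ ≤ ‖truncSeq (Set.Ici n) y‖ := by
  apply truncSeq_norm_le_of _ _ (norm_nonneg _)
  intro i hi
  have h1 : truncSeq (Set.Ici n) y i = y i := by
    simp [truncSeq_apply, Set.indicator_of_mem (mem_Ici.2 (h.trans (mem_Ici.1 hi)))]
  calc ‖y i‖ = ‖truncSeq (Set.Ici n) y i‖ := by rw [h1]
    _ ≤ _ := lp.norm_apply_le_norm ENNReal.top_ne_zero _ i

lemma quotMap_trunc (n : ℕ) (y : Linf) :
    quotMap (truncSeq (Set.Ici n) y) = quotMap y := by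
  show Submodule.Quotient.mk _ = Submodule.Quotient.mk _
  rw [Submodule.Quotient.eq]
  rw [mem_c0_iff]
  have hev : (fun _ : ℕ => (0:ℝ)) =ᶠ[atTop] fun i => (truncSeq (Set.Ici n) y - y) i := by
    filter_upwards [eventually_ge_atTop n] with i hi
    simp [lp.coeFn_sub, truncSeq_apply, Set.indicator_of_mem (mem_Ici.2 hi)]
  exact Tendsto.congr' hev tendsto_const_nhds

lemma exists_trunc_le (y : Linf) {δ : ℝ} (hδ : 0 < δ) :
    ∃ N, ‖truncSeq (Set.Ici N) y‖ ≤ ‖quotMap y‖ + δ := by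
  obtain ⟨m, hm, hmlt⟩ := Submodule.Quotient.norm_mk_lt (quotMap y) (half_pos hδ)
  have hmem : m - y ∈ c0 := by
    rw [← Submodule.Quotient.eq]
    exact hm
  rw [mem_c0_iff] at hmem
  rw [Metric.tendsto_atTop] at hmem
  obtain ⟨N, hN⟩ := hmem (δ/2) (half_pos hδ)
  refine ⟨N, truncSeq_norm_le_of _ _ (by positivity) fun i hi => ?_⟩
  have h1 : ‖m i‖ ≤ ‖m‖ := lp.norm_apply_le_norm ENNReal.top_ne_zero m i
  have h2 : dist ((m - y) i) 0 < δ/2 := hN i (mem_Ici.1 hi)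
  rw [dist_zero_right] at h2
  have h3 : (m - y) i = m i - y i := by simp [lp.coeFn_sub]
  rw [h3] at h2
  have h4 : ‖y i‖ ≤ ‖m i‖ + ‖m i - y i‖ := by
    calc ‖y i‖ = ‖m i - (m i - y i)‖ := by ring_nf
      _ ≤ _ := norm_sub_le _ _
  simp only [Real.norm_eq_abs] at *
  linarith

lemma quot_norm_zero_mem {y : Linf} (h : ‖quotMap y‖ = 0) : y ∈ c0 := by
  rw [mem_c0_iff, Metric.tendsto_atTop]
  intro δ hδ
  obtain ⟨N, hN⟩ := exists_trunc_le y (half_pos hδ)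
  refine ⟨N, fun i hi => ?_⟩
  have h1 : ‖truncSeq (Set.Ici N) y i‖ ≤ ‖truncSeq (Set.Ici N) y‖ :=
    lp.norm_apply_le_norm ENNReal.top_ne_zero _ i
  have h2 : truncSeq (Set.Ici N) y i = y i := by
    simp [truncSeq_apply, Set.indicator_of_mem (mem_Ici.2 hi)]
  rw [h2] at h1
  rw [dist_zero_right]
  rw [h] at hN
  calc ‖y i‖ ≤ 0 + δ/2 := h1.trans hN
    _ < δ := by linarith

lemma continuous_comp_sub (Y : Submodule ℝ Linf) {f : Linf → ℝ}
    (h : ∀ a b : Linf, |f a - f b| ≤ ‖a - b‖) : Continuous fun y : Y => f ↑y := by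
  refine (LipschitzWith.of_dist_le_mul (K := 1) fun a b => ?_).continuous
  rw [NNReal.coe_one, one_mul, Real.dist_eq, Subtype.dist_eq, dist_eq_norm]
  exact h ↑a ↑b

lemma norm_quotMap_le (y : Linf) : ‖quotMap y‖ ≤ ‖y‖ :=
  Submodule.Quotient.norm_mk_le _ y


/-- if `π` restricted to a finite-dimensional subspace `Y ⊆ ℓ∞` is an
isomorphism onto its image `X`, then for every `ε > 0` there is `N` such that for all
`n > N` the map `y_{[n,∞)} ↦ π(y)` is an isomorphism of `Y_{[n,∞)}` onto `X` which is
bounded below by `1 - ε`. -/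
theorem stmt0 (Y : Submodule ℝ Linf) (hYfin : FiniteDimensional ℝ Y)
    (hinj : ∀ y ∈ Y, quotMap y = 0 → y = 0)
    (ε : ℝ) (hε : 0 < ε) :
    ∃ N : ℕ, ∀ n : ℕ, n > N → ∀ y ∈ Y,
      quotMap (truncSeq (Set.Ici n) y) = quotMap y ∧
      (1 - ε) * ‖truncSeq (Set.Ici n) y‖ ≤ ‖quotMap y‖ := by
  haveI := hYfin
  -- case ε > 1 : trivial
  rcases le_or_gt ε 1 with hε1 | hε1
  swap
  · refine ⟨0, fun n _ y _ => ⟨quotMap_trunc n y, ?_⟩⟩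
    have : (1 - ε) * ‖truncSeq (Set.Ici n) y‖ ≤ 0 :=
      mul_nonpos_of_nonpos_of_nonneg (by linarith) (norm_nonneg _)
    exact this.trans (norm_nonneg _)
  -- main case
  by_cases hS : (Metric.sphere (0 : Y) 1).Nonempty
  swap
  · -- Y is trivial
    refine ⟨0, fun n _ y hy => ⟨quotMap_trunc n y, ?_⟩⟩
    have hy0 : y = 0 := by
      by_contra h0
      have hny : ‖y‖ ≠ 0 := norm_ne_zero_iff.2 h0
      refine hS ⟨‖y‖⁻¹ • ⟨y, hy⟩, ?_⟩
      rw [mem_sphere_iff_norm, sub_zero, norm_smul, norm_inv, norm_norm]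
      show ‖y‖⁻¹ * ‖(y : Linf)‖ = 1
      field_simp
    subst hy0
    rw [truncSeq_zero, map_zero]
    simp
  -- continuity
  have hg : Continuous fun y : Y => ‖quotMap (y : Linf)‖ := by
    refine continuous_comp_sub Y (f := fun w : Linf => ‖quotMap w‖) fun a b => ?_
    refine (abs_norm_sub_norm_le _ _).trans ?_
    rw [← map_sub]
    exact norm_quotMap_le _
  have hf : ∀ n : ℕ, Continuous fun y : Y => ‖truncSeq (Set.Ici n) (y : Linf)‖ := by
    intro n
    refine continuous_comp_sub Y (f := fun w : Linf => ‖truncSeq (Set.Ici n) w‖) fun a b => ?_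
    refine (abs_norm_sub_norm_le _ _).trans ?_
    rw [← truncSeq_sub]
    exact truncSeq_norm_le _ _
  -- minimum of the quotient norm on the sphere
  have hcpt : IsCompact (Metric.sphere (0 : Y) 1) := isCompact_sphere 0 1
  obtain ⟨x₀, hx₀S, hx₀min⟩ := hcpt.exists_isMinOn hS hg.continuousOn
  set c : ℝ := ‖quotMap (x₀ : Linf)‖ with hc
  have hcpos : 0 < c := by
    rcases lt_or_eq_of_le (norm_nonneg (quotMap (x₀ : Linf))) with h | h
    · exact h
    · exfalso
      have hmem : (x₀ : Linf) ∈ c0 := quot_norm_zero_mem h.symm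
      have hq0 : quotMap (x₀ : Linf) = 0 := (Submodule.Quotient.mk_eq_zero _).2 hmem
      have := hinj _ x₀.2 hq0
      have hx0 : x₀ = 0 := Subtype.ext this
      rw [mem_sphere_iff_norm, hx0, sub_zero, norm_zero] at hx₀S
      exact one_ne_zero hx₀S.symm
  set δ : ℝ := ε * c with hδdef
  have hδpos : 0 < δ := mul_pos hε hcpos
  -- open cover of the sphere
  set U : ℕ → Set Y :=
    fun n => {y : Y | ‖truncSeq (Set.Ici n) (y : Linf)‖ < ‖quotMap (y : Linf)‖ + δ} with hU
  have hUopen : ∀ n, IsOpen (U n) := fun n => isOpen_lt (hf n) (hg.add continuous_const)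
  have hUmono : Monotone U := by
    intro m n hmn y hy
    exact lt_of_le_of_lt (trunc_anti _ hmn) hy
  have hUcover : Metric.sphere (0 : Y) 1 ⊆ ⋃ n, U n := by
    intro y _
    obtain ⟨N, hN⟩ := exists_trunc_le (y : Linf) (half_pos hδpos)
    exact mem_iUnion.2 ⟨N, lt_of_le_of_lt hN (by linarith)⟩
  obtain ⟨N, hN⟩ := hcpt.elim_directed_cover U hUopen hUcover hUmono.directed_le
  refine ⟨N, fun n hn y hy => ⟨quotMap_trunc n y, ?_⟩⟩
  by_cases hy0 : y = 0
  · subst hy0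
    rw [truncSeq_zero, map_zero]
    simp
  have hny : (0:ℝ) < ‖y‖ := norm_pos_iff.2 hy0
  set z : Y := ‖y‖⁻¹ • ⟨y, hy⟩ with hzdef
  have hzcoe : (z : Linf) = ‖y‖⁻¹ • y := rfl
  have hznorm : ‖(z : Linf)‖ = 1 := by
    rw [hzcoe, norm_smul, norm_inv, norm_norm]
    field_simp
  have hzS : z ∈ Metric.sphere (0 : Y) 1 := by
    rw [mem_sphere_iff_norm, sub_zero]
    exact hznorm
  have hkey : ‖truncSeq (Set.Ici n) (z : Linf)‖ < ‖quotMap (z : Linf)‖ + δ :=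
    lt_of_le_of_lt (trunc_anti _ (le_of_lt hn)) (hN hzS)
  have hcz : c ≤ ‖quotMap (z : Linf)‖ := hx₀min hzS
  have htrz : ‖truncSeq (Set.Ici n) (z : Linf)‖ = ‖y‖⁻¹ * ‖truncSeq (Set.Ici n) y‖ := by
    rw [hzcoe, truncSeq_smul, norm_smul, norm_inv, norm_norm]
  have hqz : ‖quotMap (z : Linf)‖ = ‖y‖⁻¹ * ‖quotMap y‖ := by
    rw [hzcoe, map_smul]
    have h := norm_smul (‖y‖⁻¹) (quotMap y)
    rw [norm_inv, norm_norm] at h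
    exact h
  rw [htrz, hqz] at hkey
  rw [hqz] at hcz
  have hQ : 0 ≤ ‖quotMap y‖ := norm_nonneg _
  have hT : 0 ≤ ‖truncSeq (Set.Ici n) y‖ := norm_nonneg _
  have hδle : δ ≤ ε * (‖y‖⁻¹ * ‖quotMap y‖) := by
    rw [hδdef]
    exact mul_le_mul_of_nonneg_left hcz hε.le
  have hkey2 : ‖y‖⁻¹ * ‖truncSeq (Set.Ici n) y‖ ≤
      (1 + ε) * (‖y‖⁻¹ * ‖quotMap y‖) := by nlinarith
  have hT' : ‖truncSeq (Set.Ici n) y‖ ≤ (1 + ε) * ‖quotMap y‖ := by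
    calc ‖truncSeq (Set.Ici n) y‖ = ‖y‖ * (‖y‖⁻¹ * ‖truncSeq (Set.Ici n) y‖) := by
          field_simp
      _ ≤ ‖y‖ * ((1 + ε) * (‖y‖⁻¹ * ‖quotMap y‖)) := mul_le_mul_of_nonneg_left hkey2 hny.le
      _ = (1 + ε) * ‖quotMap y‖ := by field_simp
  nlinarith [mul_le_mul_of_nonneg_left hT' (by linarith : (0:ℝ) ≤ 1 - ε),
    mul_nonneg (mul_nonneg hε.le hε.le) hQ]
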